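/- Let D_V be the balanced plane digraph of a trinity and let A be the free abelian group Z^{V ∪ E ∪ R}, with white-triangle equivalence ≈_W meaning that the difference of two elements is an integer linear combination of characteristic vectors of white triangles. If chip configurations x_V and y_V on V are linearly equivalent in D_V, then (x_V, 0, 0) ≈_W (y_V, 0, 0). -/

import Mathlib

open Finset

/-- A combinatorial trinity: a triangulation of the sphere `S²` whose `0`-simplices are
properly three-colored by `V` (violet), `E` (emerald) and `R` (red).  It is encoded by
its sets `Tw` of white and `Tb` of black triangles, the color of each corner of each
triangle, and the three edge-gluing bijections `σR`, `σE`, `σV` matching each white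
triangle with the black triangle sharing its red (resp. emerald, violet) edge.  The
link conditions state that the triangles around each vertex form a single cycle, and
connectivity of the surface is required; the sphere (Euler) condition
`|V| + |E| + |R| = |Tw| + 2` appears as a hypothesis of the theorems. -/
structure Trinity (V E R Tw Tb : Type) where
  vw : Tw → V
  ew : Tw → E
  rW : Tw → R
  vb : Tb → V
  eb : Tb → E
  rb : Tb → R
  σR : Tw ≃ Tb
  σE : Tw ≃ Tb
  σV : Tw ≃ Tb
  σR_v : ∀ t, vb (σR t) = vw t
  σR_e : ∀ t, eb (σR t) = ew t
  σE_v : ∀ t, vb (σE t) = vw t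
  σE_r : ∀ t, rb (σE t) = rW t
  σV_e : ∀ t, eb (σV t) = ew t
  σV_r : ∀ t, rb (σV t) = rW t
  vsurj : Function.Surjective vw
  esurj : Function.Surjective ew
  rsurj : Function.Surjective rW
  linkV : ∀ t t' : Tw, vw t = vw t' →
    Relation.ReflTransGen (fun a b => σR a = σE b) t t'
  linkE : ∀ t t' : Tw, ew t = ew t' →
    Relation.ReflTransGen (fun a b => σR a = σV b) t t'
  linkR : ∀ t t' : Tw, rW t = rW t' →
    Relation.ReflTransGen (fun a b => σE a = σV b) t t'
  conn : ∀ t t' : Tw, Relation.ReflTransGen (fun a b =>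
    σR a = σE b ∨ σR a = σV b ∨ σE a = σR b ∨ σE a = σV b ∨ σV a = σR b ∨ σV a = σE b) t t'

namespace Trinity

variable {V E R Tw Tb : Type}

/-- The characteristic vector (in `ℤ^{V∪E∪R}`) of a white triangle. -/
def chi [DecidableEq V] [DecidableEq E] [DecidableEq R]
    (S : Trinity V E R Tw Tb) (t : Tw) : (V → ℤ) × (E → ℤ) × (R → ℤ) :=
  (fun v => if S.vw t = v then 1 else 0,
   fun e => if S.ew t = e then 1 else 0,
   fun r => if S.rW t = r then 1 else 0)

/-- The Laplacian of the balanced plane digraph `D_V` applied to `z : V → ℤ`: for each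
white triangle `t`, the corresponding edge of `D_V` points from the violet vertex of
the black triangle `σV t` to the violet vertex of `t` (they share their violet edge),
and firing moves one chip along each such edge. -/
def lapV [Fintype Tw] [DecidableEq V] (S : Trinity V E R Tw Tb) (z : V → ℤ) : V → ℤ :=
  fun u => ∑ t : Tw, z (S.vb (S.σV t)) *
    ((if S.vw t = u then 1 else 0) - (if S.vb (S.σV t) = u then 1 else 0))

/-- Linear equivalence of chip configurations on `D_V`. -/
def linEqV [Fintype Tw] [DecidableEq V] (S : Trinity V E R Tw Tb) (x y : V → ℤ) : Prop :=
  ∃ z : V → ℤ, y = x + S.lapV z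

/-- The Laplacian of the balanced plane digraph `D_E` applied to `z : E → ℤ`. -/
def lapE [Fintype Tw] [DecidableEq E] (S : Trinity V E R Tw Tb) (z : E → ℤ) : E → ℤ :=
  fun u => ∑ t : Tw, z (S.eb (S.σE t)) *
    ((if S.ew t = u then 1 else 0) - (if S.eb (S.σE t) = u then 1 else 0))

/-- Linear equivalence of chip configurations on `D_E`. -/
def linEqE [Fintype Tw] [DecidableEq E] (S : Trinity V E R Tw Tb) (x y : E → ℤ) : Prop :=
  ∃ z : E → ℤ, y = x + S.lapE z

/-- The red graph `G_R`: the bipartite graph on `V ∪ E` formed by the red edges (the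
support simple graph; each red edge lies in a unique white triangle). -/
def SR (S : Trinity V E R Tw Tb) : SimpleGraph (V ⊕ E) where
  Adj a b := ∃ t : Tw, (a = Sum.inl (S.vw t) ∧ b = Sum.inr (S.ew t)) ∨
    (b = Sum.inl (S.vw t) ∧ a = Sum.inr (S.ew t))
  symm := by
    constructor
    rintro a b ⟨t, h | h⟩
    exacts [⟨t, Or.inr h⟩, ⟨t, Or.inl h⟩]
  loopless := by
    constructor
    rintro a ⟨t, ⟨h1, h2⟩ | ⟨h1, h2⟩⟩ <;> subst h1 <;> simp at h2

/-- The violet graph `G_V`: the bipartite graph on `R ∪ E` formed by the violet edges. -/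
def SV (S : Trinity V E R Tw Tb) : SimpleGraph (R ⊕ E) where
  Adj a b := ∃ t : Tw, (a = Sum.inl (S.rW t) ∧ b = Sum.inr (S.ew t)) ∨
    (b = Sum.inl (S.rW t) ∧ a = Sum.inr (S.ew t))
  symm := by
    constructor
    rintro a b ⟨t, h | h⟩
    exacts [⟨t, Or.inr h⟩, ⟨t, Or.inl h⟩]
  loopless := by
    constructor
    rintro a ⟨t, ⟨h1, h2⟩ | ⟨h1, h2⟩⟩ <;> subst h1 <;> simp at h2

/-- `f : E → ℤ` is a hypertree of the red graph `G_R` on `E`. -/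
def hypertreeRE (S : Trinity V E R Tw Tb) (f : E → ℤ) : Prop :=
  ∃ T : SimpleGraph (V ⊕ E), T ≤ S.SR ∧ T.IsTree ∧
    ∀ e : E, ((T.neighborSet (Sum.inr e)).ncard : ℤ) = f e + 1

/-- `f : E → ℤ` is a hypertree of the violet graph `G_V` on `E`. -/
def hypertreeVE (S : Trinity V E R Tw Tb) (f : E → ℤ) : Prop :=
  ∃ T : SimpleGraph (R ⊕ E), T ≤ S.SV ∧ T.IsTree ∧
    ∀ e : E, ((T.neighborSet (Sum.inr e)).ncard : ℤ) = f e + 1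

/-- `f : V → ℤ` is a hypertree of the red graph `G_R` on `V`. -/
def hypertreeRV (S : Trinity V E R Tw Tb) (f : V → ℤ) : Prop :=
  ∃ T : SimpleGraph (V ⊕ E), T ≤ S.SR ∧ T.IsTree ∧
    ∀ v : V, ((T.neighborSet (Sum.inl v)).ncard : ℤ) = f v + 1

/-- The common degree `d(e) = d_{G_R}(e) = d_{G_V}(e)` of an emerald vertex, i.e. the
number of white triangles at `e`. -/
noncomputable def dE (S : Trinity V E R Tw Tb) (e : E) : ℤ := (({t : Tw | S.ew t = e}).ncard : ℤ)

end Trinity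

/-- Lemma 3.2: if the chip configurations `x` and `y` on `V` are
linearly equivalent in `D_V`, then `(x, 0, 0)` and `(y, 0, 0)` are white-triangle
equivalent, i.e. their difference is an integer linear combination of characteristic
vectors of white triangles. -/
theorem lin_equiv_implies_white_triangle_equiv
    {V E R Tw Tb : Type} [Fintype V] [Fintype E] [Fintype R] [Fintype Tw]
    [DecidableEq V] [DecidableEq E] [DecidableEq R]
    (S : Trinity V E R Tw Tb)
    (heuler : Fintype.card V + Fintype.card E + Fintype.card R = Fintype.card Tw + 2)
    (x y : V → ℤ) (hxy : S.linEqV x y) :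
    ∃ c : Tw → ℤ,
      ((y - x, 0, 0) : (V → ℤ) × (E → ℤ) × (R → ℤ)) = ∑ t : Tw, c t • S.chi t := by
  haveI : Fintype Tb := Fintype.ofEquiv Tw S.σV
  obtain ⟨z, hz⟩ := hxy
  refine ⟨fun t => z (S.vb (S.σV t)) - z (S.vw t), ?_⟩
  have hz' : y - x = S.lapV z := by rw [hz]; funext u; simp
  rw [hz']
  refine Prod.ext ?_ (Prod.ext ?_ ?_)
  · funext u
    simp only [Prod.fst_sum, Trinity.lapV, Finset.sum_apply, Trinity.chi,
      Prod.smul_fst, Pi.smul_apply, smul_eq_mul]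
    have h1 : ∑ t : Tw, z (S.vw t) * (if S.vw t = u then 1 else 0)
        = ∑ t : Tw, z (S.vb (S.σV t)) * (if S.vb (S.σV t) = u then 1 else 0) := by
      have hR := Equiv.sum_comp S.σR (fun b => z (S.vb b) * (if S.vb b = u then 1 else 0))
      have hV := Equiv.sum_comp S.σV (fun b => z (S.vb b) * (if S.vb b = u then 1 else 0))
      simp only [S.σR_v] at hR
      rw [hR, ← hV]
    simp only [sub_mul, mul_sub, Finset.sum_sub_distrib]
    rw [h1]
  · funext e
    simp only [Prod.snd_sum, Prod.fst_sum, Trinity.chi, Finset.sum_apply,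
      Prod.smul_snd, Prod.smul_fst, Pi.smul_apply, smul_eq_mul, Pi.zero_apply]
    have h1 : ∑ t : Tw, z (S.vw t) * (if S.ew t = e then 1 else 0)
        = ∑ t : Tw, z (S.vb (S.σV t)) * (if S.ew t = e then 1 else 0) := by
      have hR := Equiv.sum_comp S.σR (fun b => z (S.vb b) * (if S.eb b = e then 1 else 0))
      have hV := Equiv.sum_comp S.σV (fun b => z (S.vb b) * (if S.eb b = e then 1 else 0))
      simp only [S.σR_v, S.σR_e] at hR
      simp only [S.σV_e] at hV
      rw [hR, ← hV]
    simp only [sub_mul, Finset.sum_sub_distrib]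
    rw [h1, sub_self]
  · funext r
    simp only [Prod.snd_sum, Trinity.chi, Finset.sum_apply,
      Prod.smul_snd, Pi.smul_apply, smul_eq_mul, Pi.zero_apply]
    have h1 : ∑ t : Tw, z (S.vw t) * (if S.rW t = r then 1 else 0)
        = ∑ t : Tw, z (S.vb (S.σV t)) * (if S.rW t = r then 1 else 0) := by
      have hE := Equiv.sum_comp S.σE (fun b => z (S.vb b) * (if S.rb b = r then 1 else 0))
      have hV := Equiv.sum_comp S.σV (fun b => z (S.vb b) * (if S.rb b = r then 1 else 0))
      simp only [S.σE_v, S.σE_r] at hE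
      simp only [S.σV_r] at hV
      rw [hE, ← hV]
    simp only [sub_mul, Finset.sum_sub_distrib]
    rw [h1, sub_self]
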